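/- The operator ω_ρ is a state on h ⊗ h: it is positive and has trace tr(ω_ρ) = tr(ρ) = 1. -/

import Mathlib

open scoped InnerProductSpace

/-- The operator `ω_ρ` is a state on `h ⊗ h`: it is positive and has trace
`tr(ω_ρ) = tr(ρ) = 1`. -/
theorem omega_rho_is_state
    {H : Type*} [NormedAddCommGroup H] [InnerProductSpace ℂ H] [CompleteSpace H]
    {K : Type*} [NormedAddCommGroup K] [InnerProductSpace ℂ K] [CompleteSpace K]
    (tp : H →ₗ[ℂ] H →ₗ[ℂ] K)
    (htp : ∀ u v u' v' : H, ⟪tp u v, tp u' v'⟫_ℂ = ⟪u, u'⟫_ℂ * ⟪v, v'⟫_ℂ)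
    (hdense : (Submodule.span ℂ
        (Set.range fun uv : H × H => tp uv.1 uv.2)).topologicalClosure = ⊤)
    {ι : Type*} (e : HilbertBasis ι ℂ H)
    (ρ sq : H →L[ℂ] H) (hρ : ρ.IsPositive)
    (hρtr : HasSum (fun i : ι => ⟪e i, ρ (e i)⟫_ℂ) 1)
    (hsqpos : sq.IsPositive) (hsq : sq ∘L sq = ρ)
    (W : K →L[ℂ] K)
    (hW : ∀ p : ι × ι,
      W (tp (e p.1) (e p.2))
        = ⟪sq (e p.1), e p.2⟫_ℂ • ∑' i : ι, tp (e i) (sq (e i))) :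
    W.IsPositive ∧
      HasSum (fun p : ι × ι =>
        ⟪tp (e p.1) (e p.2), W (tp (e p.1) (e p.2))⟫_ℂ) 1 := by
  classical
  -- norm of tp u v
  have hnorm : ∀ u v : H, ‖tp u v‖ = ‖u‖ * ‖v‖ := by
    intro u v
    have h := htp u v u v
    rw [inner_self_eq_norm_sq_to_K, inner_self_eq_norm_sq_to_K,
      inner_self_eq_norm_sq_to_K] at h
    norm_cast at h
    have h3 : ‖tp u v‖ ^ 2 = (‖u‖ * ‖v‖) ^ 2 := by rw [mul_pow]; exact h
    have := congrArg Real.sqrt h3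
    rwa [Real.sqrt_sq (norm_nonneg _), Real.sqrt_sq (by positivity)] at this
  -- continuous linear maps obtained from tp by fixing one argument
  let tpL : H → H →L[ℂ] K := fun u =>
    (tp u).mkContinuous ‖u‖ (fun v => le_of_eq (hnorm u v))
  let tpR : H → H →L[ℂ] K := fun v =>
    (tp.flip v).mkContinuous ‖v‖ (fun u => by
      simp only [LinearMap.flip_apply]
      rw [hnorm]; ring_nf; exact le_rfl)
  have tpL_apply : ∀ u v, tpL u v = tp u v := fun u v => rfl
  have tpR_apply : ∀ v u, tpR v u = tp u v := fun v u => rfl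
  -- the trace of rho in terms of sq
  have hsqsa : ∀ x y : H, ⟪sq x, y⟫_ℂ = ⟪x, sq y⟫_ℂ := by
    intro x y
    rw [← ContinuousLinearMap.adjoint_inner_left,
      ContinuousLinearMap.isSelfAdjoint_iff'.mp hsqpos.isSelfAdjoint]
  have hsqnorm : ∀ i : ι, ⟪e i, ρ (e i)⟫_ℂ = ((‖sq (e i)‖ ^ 2 : ℝ) : ℂ) := by
    intro i
    rw [← hsq]
    show ⟪e i, sq (sq (e i))⟫_ℂ = _
    rw [← hsqsa, inner_self_eq_norm_sq_to_K]
    norm_cast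
  have hsum_k : HasSum (fun k : ι => ‖sq (e k)‖ ^ 2) 1 := by
    have h := hρtr.mapL Complex.reCLM
    simp only [Complex.reCLM_apply, hsqnorm, Complex.ofReal_re, Complex.one_re] at h
    exact h
  -- summability of the family defining Ω
  have horth : OrthogonalFamily ℂ (fun _ : ι => H)
      (fun i => ⟨tp (e i), fun v => by rw [hnorm, e.orthonormal.1 i, one_mul]⟩) := by
    intro i j hij v w
    show ⟪tp (e i) v, tp (e j) w⟫_ℂ = 0
    rw [htp, e.orthonormal.2 hij, zero_mul]
  have hsummable : Summable (fun i : ι => tp (e i) (sq (e i))) :=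
    (horth.summable_iff_norm_sq_summable (fun i => sq (e i))).mpr hsum_k.summable
  set Ω : K := ∑' i : ι, tp (e i) (sq (e i)) with hΩdef
  have hinner : ∀ x : K, ⟪x, Ω⟫_ℂ = ∑' i : ι, ⟪x, tp (e i) (sq (e i))⟫_ℂ := by
    intro x
    exact ((hsummable.hasSum.mapL (innerSL ℂ x)).tsum_eq).symm
  have hkey : ∀ k l : ι, ⟪tp (e k) (e l), Ω⟫_ℂ = ⟪e l, sq (e k)⟫_ℂ := by
    intro k l
    rw [hinner]
    have h0 : ∀ i : ι, i ≠ k → ⟪tp (e k) (e l), tp (e i) (sq (e i))⟫_ℂ = 0 := by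
      intro i hik
      rw [htp, e.orthonormal.2 (Ne.symm hik), zero_mul]
    rw [tsum_eq_single k h0, htp, orthonormal_iff_ite.mp e.orthonormal]
    simp
  have hkey' : ∀ k l : ι, ⟪Ω, tp (e k) (e l)⟫_ℂ = ⟪sq (e k), e l⟫_ℂ := by
    intro k l
    rw [← inner_conj_symm, hkey, inner_conj_symm]
  -- density of the span of the basis tensors
  set N := (Submodule.span ℂ
    (Set.range fun p : ι × ι => tp (e p.1) (e p.2))).topologicalClosure with hNdef
  have key : ∀ g : H →L[ℂ] K, (∀ i, g (e i) ∈ N) → ∀ u, g u ∈ N := by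
    intro g hg u
    have hclosed : IsClosed (g ⁻¹' (N : Set K)) :=
      (Submodule.isClosed_topologicalClosure _).preimage g.continuous
    have hsub : (Submodule.span ℂ (Set.range e) : Set H) ⊆ g ⁻¹' (N : Set K) := by
      intro x hx
      have hle : Submodule.span ℂ (Set.range e) ≤ N.comap (g : H →ₗ[ℂ] K) := by
        rw [Submodule.span_le]
        rintro _ ⟨i, rfl⟩
        exact hg i
      exact hle hx
    have hdense' : Dense (Submodule.span ℂ (Set.range e) : Set H) :=
      Submodule.dense_iff_topologicalClosure_eq_top.mpr e.dense_span
    have hsub2 := closure_minimal hsub hclosed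
    have hU : (Set.univ : Set H) ⊆ g ⁻¹' (N : Set K) := by
      rw [← hdense'.closure_eq]; exact hsub2
    exact hU (Set.mem_univ u)
  have hmem : ∀ u v : H, tp u v ∈ N := by
    have step1 : ∀ (i : ι) (v : H), tp (e i) v ∈ N := by
      intro i v
      have := key (tpL (e i)) (fun j => by
        rw [tpL_apply]
        exact Submodule.le_topologicalClosure _
          (Submodule.subset_span ⟨(i, j), rfl⟩)) v
      rwa [tpL_apply] at this
    intro u v
    have := key (tpR v) (fun i => by rw [tpR_apply]; exact step1 i v) u
    rwa [tpR_apply] at this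
  have hNtop : N = ⊤ := by
    rw [eq_top_iff, ← hdense]
    refine Submodule.topologicalClosure_minimal _ ?_
      (Submodule.isClosed_topologicalClosure _)
    rw [Submodule.span_le]
    rintro _ ⟨⟨u, v⟩, rfl⟩
    exact hmem u v
  have dense2 : Dense ((Submodule.span ℂ
      (Set.range fun p : ι × ι => tp (e p.1) (e p.2)) : Submodule ℂ K) : Set K) :=
    Submodule.dense_iff_topologicalClosure_eq_top.mpr hNtop
  -- W equals the rank-one operator associated with Ω
  set V : K →L[ℂ] K :=
    (ContinuousLinearMap.toSpanSingleton ℂ Ω).comp (innerSL ℂ Ω) with hVdef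
  have hVapp : ∀ x : K, V x = ⟪Ω, x⟫_ℂ • Ω := fun x => rfl
  have hWV : W = V := by
    refine ContinuousLinearMap.ext_on dense2 ?_
    rintro _ ⟨⟨k, l⟩, rfl⟩
    rw [hVapp, hkey', hW ⟨k, l⟩]
  have hWapp : ∀ x : K, W x = ⟪Ω, x⟫_ℂ • Ω := fun x => by rw [hWV, hVapp]
  constructor
  · constructor
    · rw [← ContinuousLinearMap.isSelfAdjoint_iff_isSymmetric, ContinuousLinearMap.isSelfAdjoint_iff']
      ext x
      refine ext_inner_left ℂ (fun y => ?_)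
      rw [ContinuousLinearMap.adjoint_inner_right, hWapp, hWapp,
        inner_smul_left, inner_smul_right, inner_conj_symm]
      ring
    · intro x
      rw [ContinuousLinearMap.reApplyInnerSelf_apply, hWapp, inner_smul_left,
        RCLike.conj_mul]
      norm_cast
      positivity
  · -- the trace computation
    have hsummand : ∀ p : ι × ι,
        ⟪tp (e p.1) (e p.2), W (tp (e p.1) (e p.2))⟫_ℂ
          = ((‖⟪sq (e p.1), e p.2⟫_ℂ‖ ^ 2 : ℝ) : ℂ) := by
      rintro ⟨k, l⟩
      rw [hW ⟨k, l⟩]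
      show ⟪tp (e k) (e l), ⟪sq (e k), e l⟫_ℂ • Ω⟫_ℂ = _
      rw [inner_smul_right, hkey k l, ← inner_conj_symm (e l) (sq (e k)),
        RCLike.mul_conj]
      norm_cast
    have hfiber : ∀ k : ι,
        HasSum (fun l : ι => ‖⟪sq (e k), e l⟫_ℂ‖ ^ 2) (‖sq (e k)‖ ^ 2) := by
      intro k
      have h1 := (e.hasSum_inner_mul_inner (sq (e k)) (sq (e k))).mapL Complex.reCLM
      have h2 : ∀ l : ι, (⟪sq (e k), e l⟫_ℂ * ⟪e l, sq (e k)⟫_ℂ).re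
          = ‖⟪sq (e k), e l⟫_ℂ‖ ^ 2 := by
        intro l
        rw [← inner_conj_symm (e l) (sq (e k)), RCLike.mul_conj]
        norm_cast
      have h3 : (⟪sq (e k), sq (e k)⟫_ℂ).re = ‖sq (e k)‖ ^ 2 := by
        rw [inner_self_eq_norm_sq_to_K]
        norm_cast
      simp only [Complex.reCLM_apply, h2, h3] at h1
      exact h1
    set f : ι × ι → ℝ := fun p => ‖⟪sq (e p.1), e p.2⟫_ℂ‖ ^ 2 with hfdef
    have hsumf : Summable f :=
      (summable_prod_of_nonneg (fun p => by positivity)).mpr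
        ⟨fun k => (hfiber k).summable,
          hsum_k.summable.congr fun k => ((hfiber k).tsum_eq).symm⟩
    have hf1 : HasSum f 1 := by
      have ht : ∑' p : ι × ι, f p = 1 := by
        rw [Summable.tsum_prod' hsumf (fun k => (hfiber k).summable),
          tsum_congr (fun k => (hfiber k).tsum_eq)]
        exact hsum_k.tsum_eq
      exact ht ▸ hsumf.hasSum
    have h := hf1.mapL Complex.ofRealCLM
    simp only [Complex.ofRealCLM_apply, Complex.ofReal_one] at h
    rw [show (fun p : ι × ι => ⟪tp (e p.1) (e p.2), W (tp (e p.1) (e p.2))⟫_ℂ)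
      = fun p => ((f p : ℝ) : ℂ) from funext hsummand]
    exact h
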